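/- Let $\Omega$ be a commutative semigroup and $(L, \{\cdot,\cdot\}_{\alpha,\beta}, \blacktriangleright_{\alpha,\beta}, p_\alpha, q_\alpha)_{\alpha,\beta\in\Omega}$ a BiHom-$\Omega$-PostLie algebra with $p_\alpha, q_\alpha$ bijective. Define $<x,y>_{\alpha,\beta} := x\blacktriangleright_{\alpha,\beta}y - (p_\beta^{-1}q_\beta(y))\blacktriangleright_{\beta,\alpha}(p_\alpha q_\alpha^{-1}(x)) + \{x,y\}_{\alpha,\beta}$. Then $(L, <\cdot,\cdot>_{\alpha,\beta}, p_\alpha, q_\alpha)_{\alpha,\beta\in\Omega}$ is a BiHom-$\Omega$-Lie algebra. -/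
import Mathlib


/-- A BiHom-Ω-PostLie algebra with bijective structure maps gives a BiHom-Ω-Lie algebra. -/
theorem stmt_17
    {K : Type*} [Field K] {Ω : Type*} [CommSemigroup Ω]
    {L : Type*} [AddCommGroup L] [Module K L]
    (br ob : Ω → Ω → L →ₗ[K] L →ₗ[K] L)
    (p q : Ω → L →ₗ[K] L)
    -- the families commute
    (hpq : ∀ (α : Ω) (x : L), p α (q α x) = q α (p α x))
    -- (L, br, p, q) is a BiHom-Ω-Lie algebra
    (hpbr : ∀ (α β : Ω) (x y : L), p (α * β) (br α β x y) = br α β (p α x) (p β y))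
    (hqbr : ∀ (α β : Ω) (x y : L), q (α * β) (br α β x y) = br α β (q α x) (q β y))
    (hskew : ∀ (α β : Ω) (x y : L), br α β (q α x) (p β y) = - br β α (q β y) (p α x))
    (hjac : ∀ (α β γ : Ω) (x y z : L),
      br α (β * γ) (q α (q α x)) (br β γ (q β y) (p γ z))
        + br β (γ * α) (q β (q β y)) (br γ α (q γ z) (p α x))
        + br γ (α * β) (q γ (q γ z)) (br α β (q α x) (p β y)) = 0)
    -- multiplicativity for ob
    (hpob : ∀ (α β : Ω) (x y : L), p (α * β) (ob α β x y) = ob α β (p α x) (p β y))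
    (hqob : ∀ (α β : Ω) (x y : L), q (α * β) (ob α β x y) = ob α β (q α x) (q β y))
    -- BiHom-Ω-PostLie compatibility axioms
    (hpost1 : ∀ (α β γ : Ω) (x y z : L),
      ob (α * β) γ (br α β (q α x) (p β y)) (q γ z)
        = ob α (β * γ) (p α (q α x)) (ob β γ (p β y) z)
          - ob (α * β) γ (ob α β (q α x) (p β y)) (q γ z)
          - ob β (α * γ) (p β (q β y)) (ob α γ (p α x) z)
          + ob (β * α) γ (ob β α (q β y) (p α x)) (q γ z))
    (hpost2 : ∀ (α β γ : Ω) (x y z : L),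
      ob α (β * γ) (p α (q α x)) (br β γ y z)
        = br (α * β) γ (ob α β (q α x) y) (q γ z)
          + br β (α * γ) (q β y) (ob α γ (p α x) z))
    -- p, q are bijective, with inverses pinv, qinv
    (pinv qinv : Ω → L → L)
    (hpinv1 : ∀ (α : Ω) (x : L), p α (pinv α x) = x)
    (hpinv2 : ∀ (α : Ω) (x : L), pinv α (p α x) = x)
    (hqinv1 : ∀ (α : Ω) (x : L), q α (qinv α x) = x)
    (hqinv2 : ∀ (α : Ω) (x : L), qinv α (q α x) = x)
    -- the induced bracket
    (nbr : Ω → Ω → L → L → L)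
    (hnbr : ∀ (α β : Ω) (x y : L),
      nbr α β x y
        = ob α β x y - ob β α (pinv β (q β y)) (p α (qinv α x)) + br α β x y) :
    -- (L, nbr, p, q) is a BiHom-Ω-Lie algebra
    (∀ (α β : Ω) (x y : L), p (α * β) (nbr α β x y) = nbr α β (p α x) (p β y)) ∧
    (∀ (α β : Ω) (x y : L), q (α * β) (nbr α β x y) = nbr α β (q α x) (q β y)) ∧
    (∀ (α β : Ω) (x y : L), nbr α β (q α x) (p β y) = - nbr β α (q β y) (p α x)) ∧
    (∀ (α β γ : Ω) (x y z : L),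
      nbr α (β * γ) (q α (q α x)) (nbr β γ (q β y) (p γ z))
        + nbr β (γ * α) (q β (q β y)) (nbr γ α (q γ z) (p α x))
        + nbr γ (α * β) (q γ (q γ z)) (nbr α β (q α x) (p β y)) = 0) := by
  -- injectivity of the structure maps
  have hpinj : ∀ (α : Ω) (a b : L), p α a = p α b → a = b := by
    intro α a b h
    rw [← hpinv2 α a, h, hpinv2]
  have hqinj : ∀ (α : Ω) (a b : L), q α a = q α b → a = b := by
    intro α a b h
    rw [← hqinv2 α a, h, hqinv2]
  -- commutation of inverses
  have hc1 : ∀ (α : Ω) (u : L), pinv α (q α u) = q α (pinv α u) := by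
    intro α u
    apply hpinj α
    rw [hpinv1, hpq, hpinv1]
  have hc2 : ∀ (α : Ω) (u : L), qinv α (p α u) = p α (qinv α u) := by
    intro α u
    apply hqinj α
    rw [hqinv1, ← hpq, hqinv1]
  have h4 : ∀ (α : Ω) (u : L), q α (p α (qinv α u)) = p α u := by
    intro α u
    rw [← hpq, hqinv1]
  -- pinv is multiplicative and additive
  have hpiob : ∀ (α β : Ω) (u v : L),
      pinv (α * β) (ob α β u v) = ob α β (pinv α u) (pinv β v) := by
    intro α β u v
    apply hpinj (α * β)
    rw [hpinv1, hpob, hpinv1, hpinv1]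
  have hpibr : ∀ (α β : Ω) (u v : L),
      pinv (α * β) (br α β u v) = br α β (pinv α u) (pinv β v) := by
    intro α β u v
    apply hpinj (α * β)
    rw [hpinv1, hpbr, hpinv1, hpinv1]
  -- commuted-index variants
  have hpob' : ∀ (α β : Ω) (u v : L),
      p (α * β) (ob β α u v) = ob β α (p β u) (p α v) := by
    intro α β u v; rw [mul_comm]; exact hpob β α u v
  have hqob' : ∀ (α β : Ω) (u v : L),
      q (α * β) (ob β α u v) = ob β α (q β u) (q α v) := by
    intro α β u v; rw [mul_comm]; exact hqob β α u v
  have hpbr' : ∀ (α β : Ω) (u v : L),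
      p (α * β) (br β α u v) = br β α (p β u) (p α v) := by
    intro α β u v; rw [mul_comm]; exact hpbr β α u v
  have hqbr' : ∀ (α β : Ω) (u v : L),
      q (α * β) (br β α u v) = br β α (q β u) (q α v) := by
    intro α β u v; rw [mul_comm]; exact hqbr β α u v
  have hpiob' : ∀ (α β : Ω) (u v : L),
      pinv (α * β) (ob β α u v) = ob β α (pinv β u) (pinv α v) := by
    intro α β u v; rw [mul_comm]; exact hpiob β α u v
  have hpibr' : ∀ (α β : Ω) (u v : L),
      pinv (α * β) (br β α u v) = br β α (pinv β u) (pinv α v) := by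
    intro α β u v; rw [mul_comm]; exact hpibr β α u v
  have hpisub : ∀ (α : Ω) (a b : L), pinv α (a - b) = pinv α a - pinv α b := by
    intro α a b
    apply hpinj α
    rw [hpinv1, map_sub, hpinv1, hpinv1]
  have hpiadd : ∀ (α : Ω) (a b : L), pinv α (a + b) = pinv α a + pinv α b := by
    intro α a b
    apply hpinj α
    rw [hpinv1, map_add, hpinv1, hpinv1]
  refine ⟨?_, ?_, ?_, ?_⟩
  · intro α β x y
    simp only [hnbr, hpq, hpinv1, hpinv2, hqinv1, hqinv2, hc1, hc2, h4,
      hpob, hqob, hpbr, hqbr, hpob', hqob', hpbr', hqbr', hpiob, hpibr,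
      hpiob', hpibr', hpisub, hpiadd, map_sub, map_add,
      LinearMap.sub_apply, LinearMap.add_apply]
  · intro α β x y
    simp only [hnbr, hpq, hpinv1, hpinv2, hqinv1, hqinv2, hc1, hc2, h4,
      hpob, hqob, hpbr, hqbr, hpob', hqob', hpbr', hqbr', hpiob, hpibr,
      hpiob', hpibr', hpisub, hpiadd, map_sub, map_add,
      LinearMap.sub_apply, LinearMap.add_apply]
  · intro α β x y
    have hs := hskew α β x y
    simp only [hnbr, hpq, hpinv1, hpinv2, hqinv1, hqinv2, hc1, hc2, h4,
      hpob, hqob, hpbr, hqbr, hpob', hqob', hpbr', hqbr', hpiob, hpibr,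
      hpiob', hpibr', hpisub, hpiadd, map_sub, map_add,
      LinearMap.sub_apply, LinearMap.add_apply]
    linear_combination (norm := module) hs
  · intro α β γ x y z
    have P2a := hpost2 α β γ (pinv α (q α x)) (q β y) (p γ z)
    have P2b := hpost2 β γ α (pinv β (q β y)) (q γ z) (p α x)
    have P2c := hpost2 γ α β (pinv γ (q γ z)) (q α x) (p β y)
    have SKa := hskew α (β * γ) (q α x) (ob β γ (pinv β (q β y)) z)
    have SKb := hskew β (γ * α) (q β y) (ob γ α (pinv γ (q γ z)) x)
    have SKc := hskew γ (α * β) (q γ z) (ob α β (pinv α (q α x)) y)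
    have P1a := hpost1 β γ α (pinv β (q β y)) (pinv γ (q γ z)) (p α x)
    have P1b := hpost1 γ α β (pinv γ (q γ z)) (pinv α (q α x)) (p β y)
    have P1c := hpost1 α β γ (pinv α (q α x)) (pinv β (q β y)) (p γ z)
    have J := hjac α β γ x y z
    simp only [hnbr, hpq, hpinv1, hpinv2, hqinv1, hqinv2, hc1, hc2, h4,
      hpob, hqob, hpbr, hqbr, hpob', hqob', hpbr', hqbr', hpiob, hpibr,
      hpiob', hpibr', hpisub, hpiadd, map_sub, map_add,
      LinearMap.sub_apply, LinearMap.add_apply, mul_comm] at P2a P2b P2c SKa SKb SKc P1a P1b P1c J ⊢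
    linear_combination (norm := module)
      P2a + P2b + P2c + SKa + SKb + SKc - P1a - P1b - P1c + J
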